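/- Let H be a norm on ℝⁿ with H ∈ C¹(ℝⁿ∖{0}) and strictly convex unit ball, and H₀ its dual norm, also C¹ away from 0 with strictly convex unit ball. Then the maps H∇H : ℝⁿ → ℝⁿ and H₀∇H₀ : ℝⁿ → ℝⁿ (each extended by 0 at 0) are mutually inverse bijections. -/

import Mathlib

open Filter Set

lemma aux_inner_gradient {F : Type*} [NormedAddCommGroup F] [InnerProductSpace ℝ F]
    [CompleteSpace F] (f : F → ℝ) (x y : F) :
    (inner ℝ (gradient f x) y : ℝ) = fderiv ℝ f x y :=
  InnerProductSpace.toDual_symm_apply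

lemma aux_euler {F : Type*} [NormedAddCommGroup F] [NormedSpace ℝ F]
    (f : F → ℝ) {x : F} (hd : DifferentiableAt ℝ f x)
    (hh : ∀ t : ℝ, 0 < t → f (t • x) = t * f x) :
    fderiv ℝ f x x = f x := by
  have hsm : HasDerivAt (fun t : ℝ => t • x) x 1 := by
    simpa using (hasDerivAt_id (1:ℝ)).smul_const x
  have h0 : HasFDerivAt f (fderiv ℝ f x) ((1:ℝ) • x) := by simpa using hd.hasFDerivAt
  have h1 : HasDerivAt (fun t : ℝ => f (t • x)) (fderiv ℝ f x x) 1 := by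
    exact h0.comp_hasDerivAt 1 hsm
  have h2 : (fun t : ℝ => t * f x) =ᶠ[nhds 1] fun t : ℝ => f (t • x) := by
    filter_upwards [eventually_gt_nhds (by norm_num : (0:ℝ) < 1)] with t ht
    exact (hh t ht).symm
  have h3 : HasDerivAt (fun t : ℝ => t * f x) (f x) 1 := by
    simpa using (hasDerivAt_id (1:ℝ)).mul_const (f x)
  exact ((h3.congr_of_eventuallyEq h2.symm).unique h1).symm

lemma aux_subgrad {F : Type*} [NormedAddCommGroup F] [NormedSpace ℝ F]
    (f : F → ℝ) {x : F} (y : F) (hd : DifferentiableAt ℝ f x) {C : ℝ}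
    (hb : ∀ t : ℝ, 0 < t → f (x + t • y) ≤ f x + t * C) :
    fderiv ℝ f x y ≤ C := by
  have hsm : HasDerivAt (fun t : ℝ => x + t • y) y 0 := by
    simpa using ((hasDerivAt_id (0:ℝ)).smul_const y).const_add x
  have h0 : HasFDerivAt f (fderiv ℝ f x) (x + (0:ℝ) • y) := by simpa using hd.hasFDerivAt
  have h1 : HasDerivAt (fun t : ℝ => f (x + t • y)) (fderiv ℝ f x y) 0 :=
    h0.comp_hasDerivAt 0 hsm
  have h2 := hasDerivAt_iff_tendsto_slope.mp h1
  have h3 : Tendsto (slope (fun t : ℝ => f (x + t • y)) 0) (nhdsWithin 0 (Set.Ioi 0))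
      (nhds (fderiv ℝ f x y)) :=
    h2.mono_left (nhdsWithin_mono 0 (fun t ht => Set.mem_compl_singleton_iff.mpr (ne_of_gt ht)))
  refine le_of_tendsto h3 ?_
  filter_upwards [self_mem_nhdsWithin] with t ht
  have ht0 : (0:ℝ) < t := ht
  rw [slope_def_field]
  have hb' := hb t ht0
  rw [div_le_iff₀ (by simpa using ht0)]
  simp only [zero_smul, add_zero, sub_zero] at *
  nlinarith

lemma aux_danskin {F : Type*} [NormedAddCommGroup F] [NormedSpace ℝ F]
    (f g : F → ℝ) {x : F} (hf : DifferentiableAt ℝ f x) (hg : DifferentiableAt ℝ g x)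
    (hle : ∀ y, g y ≤ f y) (heq : f x = g x) :
    fderiv ℝ f x = fderiv ℝ g x := by
  have hmin : IsLocalMin (fun y => f y - g y) x :=
    Filter.Eventually.of_forall fun y => by
      have h1 := hle y; simp only [heq, sub_self]; linarith
  have h0 := hmin.fderiv_eq_zero
  rw [fderiv_fun_sub hf hg] at h0
  exact sub_eq_zero.mp h0

/-- The dual norm `H₀(x) = sup_{ξ ≠ 0} ⟨x, ξ⟩ / H(ξ)`. -/
noncomputable def dualNorm {n : ℕ} (H : EuclideanSpace ℝ (Fin n) → ℝ)
    (x : EuclideanSpace ℝ (Fin n)) : ℝ :=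
  ⨆ ξ : {ξ : EuclideanSpace ℝ (Fin n) // ξ ≠ 0}, (inner ℝ x ξ.1 : ℝ) / H ξ.1

theorem HgradH_inverse_bijections (n : ℕ) (H : EuclideanSpace ℝ (Fin n) → ℝ)
    (hconv : ConvexOn ℝ Set.univ H)
    (hpos : ∀ ξ, 0 ≤ H ξ)
    (hzero : ∀ ξ, H ξ = 0 ↔ ξ = 0)
    (hhom : ∀ (t : ℝ) ξ, H (t • ξ) = |t| * H ξ)
    (hC1 : ContDiffOn ℝ 1 H {(0 : EuclideanSpace ℝ (Fin n))}ᶜ)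
    (hstrict : StrictConvex ℝ {ξ : EuclideanSpace ℝ (Fin n) | H ξ < 1})
    (hC1' : ContDiffOn ℝ 1 (dualNorm H) {(0 : EuclideanSpace ℝ (Fin n))}ᶜ)
    (hstrict' : StrictConvex ℝ {x : EuclideanSpace ℝ (Fin n) | dualNorm H x < 1}) :
    Function.LeftInverse
        (fun x : EuclideanSpace ℝ (Fin n) => dualNorm H x • gradient (dualNorm H) x)
        (fun ξ : EuclideanSpace ℝ (Fin n) => H ξ • gradient H ξ) ∧
      Function.RightInverse
        (fun x : EuclideanSpace ℝ (Fin n) => dualNorm H x • gradient (dualNorm H) x)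
        (fun ξ : EuclideanSpace ℝ (Fin n) => H ξ • gradient H ξ) ∧
      Function.Bijective
        (fun ξ : EuclideanSpace ℝ (Fin n) => H ξ • gradient H ξ) ∧
      Function.Bijective
        (fun x : EuclideanSpace ℝ (Fin n) => dualNorm H x • gradient (dualNorm H) x) := by
  classical
  rcases subsingleton_or_nontrivial (EuclideanSpace ℝ (Fin n)) with hsub | hnt
  · exact ⟨fun ξ => Subsingleton.elim _ _, fun ξ => Subsingleton.elim _ _,
      ⟨fun a b _ => Subsingleton.elim a b, fun b => ⟨b, Subsingleton.elim _ _⟩⟩,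
      ⟨fun a b _ => Subsingleton.elim a b, fun b => ⟨b, Subsingleton.elim _ _⟩⟩⟩
  haveI : Nonempty {ξ : EuclideanSpace ℝ (Fin n) // ξ ≠ 0} := by
    obtain ⟨ξ, hξ⟩ := exists_ne (0 : EuclideanSpace ℝ (Fin n))
    exact ⟨⟨ξ, hξ⟩⟩
  have hH00 : H 0 = 0 := (hzero 0).mpr rfl
  have hHpos : ∀ ξ : EuclideanSpace ℝ (Fin n), ξ ≠ 0 → 0 < H ξ := fun ξ h =>
    (hpos ξ).lt_of_ne (fun h0 => h ((hzero ξ).mp h0.symm))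
  have hcont : Continuous H := by
    rw [← continuousOn_univ]
    exact hconv.continuousOn isOpen_univ
  -- lower bound c‖ξ‖ ≤ H ξ
  obtain ⟨c, hc0, hc⟩ : ∃ c > 0, ∀ ξ : EuclideanSpace ℝ (Fin n), c * ‖ξ‖ ≤ H ξ := by
    obtain ⟨ξ₀, hξ₀mem, hξ₀min⟩ := (isCompact_sphere (0 : EuclideanSpace ℝ (Fin n)) 1).exists_isMinOn
      (NormedSpace.sphere_nonempty.mpr zero_le_one) hcont.continuousOn
    have hξ₀norm : ‖ξ₀‖ = 1 := mem_sphere_zero_iff_norm.mp hξ₀mem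
    have hξ₀ne : ξ₀ ≠ 0 := by
      intro h0; rw [h0, norm_zero] at hξ₀norm; norm_num at hξ₀norm
    refine ⟨H ξ₀, hHpos ξ₀ hξ₀ne, fun ξ => ?_⟩
    by_cases h : ξ = 0
    · simp [h, hH00]
    · have hn : ‖ξ‖ ≠ 0 := norm_ne_zero_iff.mpr h
      have hu : (‖ξ‖⁻¹ • ξ) ∈ Metric.sphere (0 : EuclideanSpace ℝ (Fin n)) 1 := by
        rw [mem_sphere_zero_iff_norm, norm_smul, norm_inv, norm_norm, inv_mul_cancel₀ hn]
      have hmin := hξ₀min hu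
      have h1 := hhom ‖ξ‖ (‖ξ‖⁻¹ • ξ)
      rw [smul_smul, mul_inv_cancel₀ hn, one_smul, abs_of_nonneg (norm_nonneg ξ)] at h1
      rw [h1]
      calc H ξ₀ * ‖ξ‖ ≤ H (‖ξ‖⁻¹ • ξ) * ‖ξ‖ :=
            mul_le_mul_of_nonneg_right hmin (norm_nonneg ξ)
        _ = ‖ξ‖ * H (‖ξ‖⁻¹ • ξ) := mul_comm _ _
  have hbdd : ∀ x : EuclideanSpace ℝ (Fin n),
      BddAbove (Set.range fun ξ : {ξ : EuclideanSpace ℝ (Fin n) // ξ ≠ 0} =>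
        (inner ℝ x ξ.1 : ℝ) / H ξ.1) := by
    intro x
    refine ⟨‖x‖ / c, ?_⟩
    rintro r ⟨ξ, rfl⟩
    have hH := hHpos ξ.1 ξ.2
    rw [div_le_div_iff₀ hH hc0]
    have h1 : (inner ℝ x ξ.1 : ℝ) ≤ ‖x‖ * ‖ξ.1‖ := real_inner_le_norm x ξ.1
    have h2 := hc ξ.1
    nlinarith [norm_nonneg x, norm_nonneg ξ.1]
  have hD' : ∀ (x ξ : EuclideanSpace ℝ (Fin n)), ξ ≠ 0 →
      (inner ℝ x ξ : ℝ) / H ξ ≤ dualNorm H x := fun x ξ h =>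
    le_ciSup (hbdd x) (⟨ξ, h⟩ : {ξ : EuclideanSpace ℝ (Fin n) // ξ ≠ 0})
  have hCS : ∀ x ξ : EuclideanSpace ℝ (Fin n), (inner ℝ x ξ : ℝ) ≤ dualNorm H x * H ξ := by
    intro x ξ
    by_cases h : ξ = 0
    · simp [h, hH00]
    · have hH := hHpos ξ h
      have h1 := hD' x ξ h
      rw [div_le_iff₀ hH] at h1
      exact h1
  have hle_of : ∀ (x : EuclideanSpace ℝ (Fin n)) (M : ℝ),
      (∀ ξ : EuclideanSpace ℝ (Fin n), ξ ≠ 0 → (inner ℝ x ξ : ℝ) ≤ M * H ξ) →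
      dualNorm H x ≤ M := by
    intro x M h
    refine ciSup_le fun ξ => ?_
    rw [div_le_iff₀ (hHpos ξ.1 ξ.2)]
    exact h ξ.1 ξ.2
  have h0zero : dualNorm H (0 : EuclideanSpace ℝ (Fin n)) = 0 := by
    have h1 : ∀ ξ : {ξ : EuclideanSpace ℝ (Fin n) // ξ ≠ 0},
        (inner ℝ (0 : EuclideanSpace ℝ (Fin n)) ξ.1 : ℝ) / H ξ.1 = 0 := fun ξ => by
      simp
    rw [dualNorm]
    simp only [h1]
    exact ciSup_const
  have hdiff : ∀ ξ : EuclideanSpace ℝ (Fin n), ξ ≠ 0 → DifferentiableAt ℝ H ξ := fun ξ h =>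
    (hC1.differentiableOn one_ne_zero).differentiableAt
      (isOpen_compl_singleton.mem_nhds (Set.mem_compl_singleton_iff.mpr h))
  have hdiff0 : ∀ x : EuclideanSpace ℝ (Fin n), x ≠ 0 → DifferentiableAt ℝ (dualNorm H) x :=
    fun x h => (hC1'.differentiableOn one_ne_zero).differentiableAt
      (isOpen_compl_singleton.mem_nhds (Set.mem_compl_singleton_iff.mpr h))
  have htri : ∀ x y : EuclideanSpace ℝ (Fin n), H (x + y) ≤ H x + H y := by
    intro x y
    have h2 := hconv.2 (Set.mem_univ x) (Set.mem_univ y)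
      (by norm_num : (0:ℝ) ≤ 1/2) (by norm_num : (0:ℝ) ≤ 1/2) (by norm_num)
    simp only [smul_eq_mul] at h2
    have h3 : ((2:ℝ)) • ((1/2:ℝ) • x + (1/2:ℝ) • y) = x + y := by
      rw [smul_add, smul_smul, smul_smul]; norm_num
    have h4 := hhom 2 ((1/2:ℝ) • x + (1/2:ℝ) • y)
    rw [h3] at h4
    rw [h4]
    rw [show |(2:ℝ)| = 2 by norm_num]
    linarith
  have euler_H : ∀ ξ : EuclideanSpace ℝ (Fin n), ξ ≠ 0 →
      (inner ℝ (gradient H ξ) ξ : ℝ) = H ξ := by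
    intro ξ h
    rw [aux_inner_gradient]
    exact aux_euler H (hdiff ξ h) (fun t ht => by rw [hhom, abs_of_pos ht])
  have subgrad_H : ∀ ξ : EuclideanSpace ℝ (Fin n), ξ ≠ 0 →
      ∀ η, (inner ℝ (gradient H ξ) η : ℝ) ≤ H η := by
    intro ξ h η
    rw [aux_inner_gradient]
    refine aux_subgrad H η (hdiff ξ h) (fun t ht => ?_)
    calc H (ξ + t • η) ≤ H ξ + H (t • η) := htri _ _
      _ = H ξ + t * H η := by rw [hhom, abs_of_pos ht]
  have h7 : ∀ ξ : EuclideanSpace ℝ (Fin n), ξ ≠ 0 →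
      dualNorm H (H ξ • gradient H ξ) = H ξ := by
    intro ξ h
    refine le_antisymm ?_ ?_
    · refine hle_of _ _ fun η hη => ?_
      rw [real_inner_smul_left]
      exact mul_le_mul_of_nonneg_left (subgrad_H ξ h η) (hpos ξ)
    · have h1 := hD' (H ξ • gradient H ξ) ξ h
      rw [real_inner_smul_left, euler_H ξ h, mul_div_assoc,
        div_self (ne_of_gt (hHpos ξ h)), mul_one] at h1
      exact h1
  have hA : ∀ t : ℝ, 0 < t → ∀ x : EuclideanSpace ℝ (Fin n),
      dualNorm H (t • x) ≤ t * dualNorm H x := by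
    intro t ht x
    refine hle_of _ _ fun η hη => ?_
    rw [real_inner_smul_left, mul_assoc]
    exact mul_le_mul_of_nonneg_left (hCS x η) (le_of_lt ht)
  have h0hom : ∀ t : ℝ, 0 < t → ∀ x : EuclideanSpace ℝ (Fin n),
      dualNorm H (t • x) = t * dualNorm H x := by
    intro t ht x
    refine le_antisymm (hA t ht x) ?_
    have h1 := hA t⁻¹ (inv_pos.mpr ht) (t • x)
    rw [smul_smul, inv_mul_cancel₀ (ne_of_gt ht), one_smul] at h1
    have h2 := mul_le_mul_of_nonneg_left h1 (le_of_lt ht)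
    rwa [← mul_assoc, mul_inv_cancel₀ (ne_of_gt ht), one_mul] at h2
  have h0pos : ∀ x : EuclideanSpace ℝ (Fin n), x ≠ 0 → 0 < dualNorm H x := by
    intro x h
    have h1 := hD' x x h
    have h2 : (0:ℝ) < (inner ℝ x x : ℝ) / H x := by
      apply div_pos _ (hHpos x h)
      rw [real_inner_self_eq_norm_sq]
      exact pow_pos (norm_pos_iff.mpr h) 2
    exact lt_of_lt_of_le h2 h1
  have hb0 : ∀ x y : EuclideanSpace ℝ (Fin n), ∀ t : ℝ, 0 < t →
      dualNorm H (x + t • y) ≤ dualNorm H x + t * dualNorm H y := by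
    intro x y t ht
    refine hle_of _ _ fun η hη => ?_
    rw [inner_add_left, real_inner_smul_left]
    have h1 := hCS x η
    have h2 := mul_le_mul_of_nonneg_left (hCS y η) (le_of_lt ht)
    nlinarith
  have euler_H0 : ∀ x : EuclideanSpace ℝ (Fin n), x ≠ 0 →
      (inner ℝ (gradient (dualNorm H) x) x : ℝ) = dualNorm H x := by
    intro x h
    rw [aux_inner_gradient]
    exact aux_euler (dualNorm H) (hdiff0 x h) (fun t ht => h0hom t ht x)
  have subgrad_H0 : ∀ x : EuclideanSpace ℝ (Fin n), x ≠ 0 →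
      ∀ y, (inner ℝ (gradient (dualNorm H) x) y : ℝ) ≤ dualNorm H y := by
    intro x h y
    rw [aux_inner_gradient]
    exact aux_subgrad (dualNorm H) y (hdiff0 x h) (fun t ht => hb0 x y t ht)
  have hunit : ∀ ξ : EuclideanSpace ℝ (Fin n), ξ ≠ 0 →
      dualNorm H (gradient H ξ) = 1 := by
    intro ξ h
    have h1 := h7 ξ h
    rw [h0hom (H ξ) (hHpos ξ h) _] at h1
    exact mul_left_cancel₀ (ne_of_gt (hHpos ξ h)) (h1.trans (mul_one (H ξ)).symm)
  have hgradne : ∀ x : EuclideanSpace ℝ (Fin n), x ≠ 0 → gradient (dualNorm H) x ≠ 0 := by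
    intro x h hg
    have h1 := euler_H0 x h
    rw [hg, inner_zero_left] at h1
    exact (ne_of_gt (h0pos x h)) h1.symm
  have hdualunit : ∀ x : EuclideanSpace ℝ (Fin n), x ≠ 0 →
      H (gradient (dualNorm H) x) = 1 := by
    intro x h
    have hη : gradient (dualNorm H) x ≠ 0 := hgradne x h
    refine le_antisymm ?_ ?_
    · have h1 : H (gradient (dualNorm H) x)
          = (inner ℝ (gradient (dualNorm H) x) (gradient H (gradient (dualNorm H) x)) : ℝ) := by
        rw [real_inner_comm]
        exact (euler_H _ hη).symm
      have h2 := subgrad_H0 x h (gradient H (gradient (dualNorm H) x))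
      rw [hunit _ hη] at h2
      rw [h1]; exact h2
    · have h1 := hCS x (gradient (dualNorm H) x)
      have h2 : (inner ℝ x (gradient (dualNorm H) x) : ℝ) = dualNorm H x := by
        rw [real_inner_comm]; exact euler_H0 x h
      rw [h2] at h1
      have h3 := h0pos x h
      nlinarith
  have h7' : ∀ x : EuclideanSpace ℝ (Fin n), x ≠ 0 →
      H (dualNorm H x • gradient (dualNorm H) x) = dualNorm H x := by
    intro x h
    rw [hhom, abs_of_pos (h0pos x h), hdualunit x h, mul_one]
  -- key 1 : Ψ ∘ Φ = id away from 0
  have key1 : ∀ ξ : EuclideanSpace ℝ (Fin n), ξ ≠ 0 →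
      dualNorm H (H ξ • gradient H ξ) • gradient (dualNorm H) (H ξ • gradient H ξ) = ξ := by
    intro ξ h
    have hHξ := hHpos ξ h
    set x := H ξ • gradient H ξ with hx
    have hx0 : dualNorm H x = H ξ := h7 ξ h
    have hxne : x ≠ 0 := by
      intro h0
      rw [h0, h0zero] at hx0
      exact (ne_of_gt hHξ) hx0.symm
    set v := (H ξ)⁻¹ • ξ with hv
    have hgeq : (fun y : EuclideanSpace ℝ (Fin n) => (inner ℝ v y : ℝ)) = ⇑(innerSL ℝ v) := by
      funext y; simp
    have hgdiff : DifferentiableAt ℝ (fun y : EuclideanSpace ℝ (Fin n) => (inner ℝ v y : ℝ)) x := by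
      rw [hgeq]; exact (innerSL ℝ v).differentiableAt
    have hgle : ∀ y, (inner ℝ v y : ℝ) ≤ dualNorm H y := by
      intro y
      rw [hv, real_inner_smul_left]
      have h1 : (inner ℝ y ξ : ℝ) ≤ dualNorm H y * H ξ := hCS y ξ
      rw [real_inner_comm]
      calc (H ξ)⁻¹ * (inner ℝ y ξ : ℝ) ≤ (H ξ)⁻¹ * (dualNorm H y * H ξ) :=
            mul_le_mul_of_nonneg_left h1 (inv_nonneg.mpr (hpos ξ))
        _ = dualNorm H y := by field_simp
    have heq : dualNorm H x = (inner ℝ v x : ℝ) := by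
      rw [hx0, hv, real_inner_smul_left, hx, real_inner_smul_right, real_inner_comm,
        euler_H ξ h]
      field_simp
    have hfd := aux_danskin (dualNorm H) _ (hdiff0 x hxne) hgdiff hgle heq
    have hgrad : gradient (dualNorm H) x = v := by
      apply ext_inner_right ℝ
      intro w
      rw [aux_inner_gradient, hfd]
      rw [show fderiv ℝ (fun y : EuclideanSpace ℝ (Fin n) => (inner ℝ v y : ℝ)) x
          = innerSL ℝ v by rw [hgeq]; exact (innerSL ℝ v).fderiv]
      simp
    rw [hgrad, hx0, hv, smul_smul, mul_inv_cancel₀ (ne_of_gt hHξ), one_smul]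
  -- key 2 : Φ ∘ Ψ = id away from 0
  have key2 : ∀ x : EuclideanSpace ℝ (Fin n), x ≠ 0 →
      H (dualNorm H x • gradient (dualNorm H) x) •
        gradient H (dualNorm H x • gradient (dualNorm H) x) = x := by
    intro x h
    have hd0 := h0pos x h
    set η := dualNorm H x • gradient (dualNorm H) x with hη
    have hHη : H η = dualNorm H x := h7' x h
    have hηne : η ≠ 0 := by
      intro h0
      rw [h0, hH00] at hHη
      exact (ne_of_gt hd0) hHη.symm
    set v := (dualNorm H x)⁻¹ • x with hv
    have hgeq : (fun y : EuclideanSpace ℝ (Fin n) => (inner ℝ v y : ℝ)) = ⇑(innerSL ℝ v) := by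
      funext y; simp
    have hgdiff : DifferentiableAt ℝ (fun y : EuclideanSpace ℝ (Fin n) => (inner ℝ v y : ℝ)) η := by
      rw [hgeq]; exact (innerSL ℝ v).differentiableAt
    have hgle : ∀ y, (inner ℝ v y : ℝ) ≤ H y := by
      intro y
      rw [hv, real_inner_smul_left]
      have h1 : (inner ℝ x y : ℝ) ≤ dualNorm H x * H y := hCS x y
      calc (dualNorm H x)⁻¹ * (inner ℝ x y : ℝ)
          ≤ (dualNorm H x)⁻¹ * (dualNorm H x * H y) :=
            mul_le_mul_of_nonneg_left h1 (inv_nonneg.mpr (le_of_lt hd0))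
        _ = H y := by field_simp
    have heq : H η = (inner ℝ v η : ℝ) := by
      rw [hHη, hv, real_inner_smul_left, hη, real_inner_smul_right, ← real_inner_comm, euler_H0 x h]
      field_simp
    have hfd := aux_danskin H _ (hdiff η hηne) hgdiff hgle heq
    have hgrad : gradient H η = v := by
      apply ext_inner_right ℝ
      intro w
      rw [aux_inner_gradient, hfd]
      rw [show fderiv ℝ (fun y : EuclideanSpace ℝ (Fin n) => (inner ℝ v y : ℝ)) η
          = innerSL ℝ v by rw [hgeq]; exact (innerSL ℝ v).fderiv]
      simp
    rw [hgrad, hHη, hv, smul_smul, mul_inv_cancel₀ (ne_of_gt hd0), one_smul]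
  have left : Function.LeftInverse
      (fun x : EuclideanSpace ℝ (Fin n) => dualNorm H x • gradient (dualNorm H) x)
      (fun ξ : EuclideanSpace ℝ (Fin n) => H ξ • gradient H ξ) := by
    intro ξ
    by_cases h : ξ = 0
    · simp only [h, hH00, zero_smul, h0zero]
    · exact key1 ξ h
  have right : Function.LeftInverse
      (fun ξ : EuclideanSpace ℝ (Fin n) => H ξ • gradient H ξ)
      (fun x : EuclideanSpace ℝ (Fin n) => dualNorm H x • gradient (dualNorm H) x) := by
    intro x
    by_cases h : x = 0
    · simp only [h, h0zero, zero_smul, hH00]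
    · exact key2 x h
  exact ⟨left, right, ⟨left.injective, right.surjective⟩, ⟨right.injective, left.surjective⟩⟩
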